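/- Majority-vote / probe budget lemma: under the product model with informative prevalence ρ and noise ε < 1/2, any classifier whose output is a function only of statistics invariant under the background-permutation group achieves the same accuracy before and after any background shift; in particular the optimal shift-invariant classifier attains accuracy ρ(1−ε) + (1−ρ)/2 both in-distribution and OOD. -/

import Mathlib

/-- Accuracy under the mixture model: with probability `ρ` the example is
informative with label `h r` observed through flip-noise `ε`; with probability
`1-ρ` the label is an independent fair coin. -/
noncomputable def mixAcc {B R : Type*} [Fintype B] [Fintype R]
    (μB : B → ℝ) (μR : R → ℝ) (h : R → Bool) (ρ ε : ℝ) (c : B × R → Bool) : ℝ :=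
  ∑ b, ∑ r, μB b * μR r *
    (ρ * (if c (b, r) = h r then 1 - ε else ε) + (1 - ρ) * (1/2))

lemma mix_factor {B R : Type*} [Fintype B] [Fintype R] [Nonempty B]
    (μB : B → ℝ) (μR : R → ℝ) (h : R → Bool) (ρ ε : ℝ) (c : B × R → Bool)
    (hc : ∀ b b' r, c (b, r) = c (b', r)) (hμB1 : ∑ b, μB b = 1) :
    mixAcc μB μR h ρ ε c =
      ∑ r, μR r * (ρ * (if c (Classical.arbitrary B, r) = h r then 1 - ε else ε)
        + (1 - ρ) * (1/2)) := by
  unfold mixAcc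
  rw [Finset.sum_comm]
  refine Finset.sum_congr rfl fun r _ => ?_
  have : ∀ b, μB b * μR r *
      (ρ * (if c (b, r) = h r then 1 - ε else ε) + (1 - ρ) * (1/2)) =
      μB b * (μR r * (ρ * (if c (Classical.arbitrary B, r) = h r then 1 - ε else ε)
        + (1 - ρ) * (1/2))) := by
    intro b
    rw [hc b (Classical.arbitrary B) r]
    ring
  rw [Finset.sum_congr rfl fun b _ => this b, ← Finset.sum_mul, hμB1, one_mul]

/-- Majority-vote / probe budget lemma: any classifier factoring through the
`R`-coordinate (invariant under the background-permutation group) has the same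
accuracy after any background shift; the classifier predicting `h r` attains
`ρ(1-ε) + (1-ρ)/2`, and no shift-invariant classifier exceeds that value,
in-distribution or OOD. -/
theorem stmt15 {B R : Type*} [Fintype B] [Fintype R] [Nonempty B] [Nonempty R]
    (μB : B → ℝ) (μR : R → ℝ)
    (hμB0 : ∀ b, 0 ≤ μB b) (hμB1 : ∑ b, μB b = 1)
    (hμR0 : ∀ r, 0 ≤ μR r) (hμR1 : ∑ r, μR r = 1)
    (h : R → Bool) (ρ ε : ℝ)
    (hρ0 : 0 ≤ ρ) (hρ1 : ρ ≤ 1) (hε0 : 0 ≤ ε) (hε : ε < 1/2) :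
    (∀ c : B × R → Bool, (∀ b b' r, c (b, r) = c (b', r)) →
      ∀ σ : B ≃ B,
        mixAcc (fun b => μB (σ.symm b)) μR h ρ ε c = mixAcc μB μR h ρ ε c) ∧
    mixAcc μB μR h ρ ε (fun x => h x.2) = ρ * (1 - ε) + (1 - ρ) * (1/2) ∧
    (∀ c : B × R → Bool, (∀ b b' r, c (b, r) = c (b', r)) →
      ∀ σ : B ≃ B,
        mixAcc (fun b => μB (σ.symm b)) μR h ρ ε c ≤
          ρ * (1 - ε) + (1 - ρ) * (1/2)) := by
  have hshift : ∀ σ : B ≃ B, ∑ b, μB (σ.symm b) = 1 := fun σ => by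
    rw [Equiv.sum_comp σ.symm μB]; exact hμB1
  refine ⟨fun c hc σ => ?_, ?_, fun c hc σ => ?_⟩
  · rw [mix_factor _ _ _ _ _ _ hc (hshift σ), mix_factor _ _ _ _ _ _ hc hμB1]
  · have : (∀ b b' r, (fun x : B × R => h x.2) (b, r) = (fun x : B × R => h x.2) (b', r)) :=
      fun _ _ _ => rfl
    rw [mix_factor _ _ _ _ _ _ this hμB1]
    simp only [if_pos rfl]
    rw [← Finset.sum_mul, hμR1, one_mul]
    simp
  · rw [mix_factor _ _ _ _ _ _ hc (hshift σ)]
    calc ∑ r, μR r * (ρ * (if c (Classical.arbitrary B, r) = h r then 1 - ε else ε)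
          + (1 - ρ) * (1/2))
        ≤ ∑ r, μR r * (ρ * (1 - ε) + (1 - ρ) * (1/2)) := by
          refine Finset.sum_le_sum fun r _ => ?_
          refine mul_le_mul_of_nonneg_left (add_le_add_left
            (mul_le_mul_of_nonneg_left ?_ hρ0) _) (hμR0 r)
          split <;> linarith
      _ = ρ * (1 - ε) + (1 - ρ) * (1/2) := by rw [← Finset.sum_mul, hμR1, one_mul]
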